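/- Let G be a group, H ≤ G, Σ a finite alphabet, and F a finite set of forbidden patterns over finite subsets of H. Then the G-SFT defined by F is nonempty if and only if the H-SFT defined by F is nonempty. -/

import Mathlib

/-- A pattern `P` with finite domain `D ⊆ K` appears in a configuration
`x : K → A` if some `K`-translate of `x` matches `P` on `D`. -/
def Appears {K A : Type*} [Group K] (x : K → A) (D : Finset K) (P : D → A) :
    Prop :=
  ∃ i : K, ∀ j : D, x (i * (j : K)) = P j

theorem stmt_12 (G A : Type*) [Group G] [Fintype A] (H : Subgroup G)
    (ι : Type*) [Finite ι] (D : ι → Finset G) (hD : ∀ k, ↑(D k) ⊆ (H : Set G))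
    (P : ∀ k, (D k) → A) :
    (∃ c' : G → A, ∀ k, ¬ Appears c' (D k) (P k)) ↔
      (∃ c : H → A,
        ∀ k, ¬ ∃ i : H, ∀ j : D k, c (i * ⟨(j : G), hD k j.2⟩) = P k j) := by
  constructor
  · rintro ⟨c', hc'⟩
    refine ⟨fun h => c' h, fun k ⟨i, hi⟩ => hc' k ⟨i, fun j => ?_⟩⟩
    simpa using hi j
  · rintro ⟨c, hc⟩
    have mem : ∀ g : G, ((QuotientGroup.mk g : G ⧸ H)).out⁻¹ * g ∈ H := by
      intro g
      have h : (QuotientGroup.mk ((QuotientGroup.mk g : G ⧸ H)).out : G ⧸ H)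
          = QuotientGroup.mk g := QuotientGroup.out_eq' _
      exact (QuotientGroup.eq ).mp h
    refine ⟨fun g => c ⟨((QuotientGroup.mk g : G ⧸ H)).out⁻¹ * g, mem g⟩, ?_⟩
    rintro k ⟨i, hi⟩
    apply hc k
    refine ⟨⟨((QuotientGroup.mk i : G ⧸ H)).out⁻¹ * i, mem i⟩, fun j => ?_⟩
    rw [← hi j]
    have hq : (QuotientGroup.mk (i * (j : G)) : G ⧸ H) = QuotientGroup.mk i := by
      symm
      rw [QuotientGroup.eq]
      simpa using hD k j.2
    congr 1
    apply Subtype.ext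
    simp [hq, mul_assoc]
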